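/- arXiv:1912.05815 — 5 statements merged into one kernel-verified Lean document; each statement's English description precedes it below -/
import Mathlib

section
/- Let c(x) ∈ R[x]/⟨x^N - λ⟩ and let 0 ≤ i ≤ N-1. Write (1-x)^i c(x) = d_0 + d_1 x + ... + d_{N-1} x^{N-1} modulo x^N - λ. Then the i-th derivative D^i(c) of the coefficient vector c = (c_0,...,c_{N-1}) equals (d_i, d_{i+1}, ..., d_{N-1}), the last N-i coefficients of (1-x)^i c(x). -/
variable {R : Type*} [CommRing R]

/-- The derivative (difference) operator on sequences/vectors. -/
def der (a : ℕ → R) : ℕ → R := fun k => a (k + 1) - a k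

open Classical in
/-- Depth of a vector `a ∈ R^N` (represented by its first `N` coordinates):
the least `i ≤ N-1` with `D^i(a) = 0 ∈ R^{N-i}`, and `N` if none exists. -/
noncomputable def depth (N : ℕ) (a : ℕ → R) : ℕ :=
  if h : ∃ i, i < N ∧ ∀ k, k < N - i → der^[i] a k = 0 then Nat.find h else N

open Polynomial in
lemma der_iter_coeff (c : Polynomial R) (i : ℕ) :
    ∀ k, der^[i] c.coeff k = ((1 - X) ^ i * c).coeff (i + k) := by
  induction i with
  | zero => intro k; simp
  | succ i ih =>
    intro k
    rw [Function.iterate_succ_apply']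
    have h : (1 - X) ^ (i + 1) * c = (1 - X) ^ i * c - X * ((1 - X) ^ i * c) := by
      ring
    rw [der, ih, ih, h, coeff_sub]
    have : i + 1 + k = (i + k) + 1 := by ring
    rw [this, coeff_X_mul]
    ring_nf

open Polynomial in
theorem iterated_derivative_eq_coeffs (N : ℕ) (hN : 0 < N) (lam : R) (hlam : IsUnit lam)
    (c : Polynomial R) (hc : c.natDegree < N) (i : ℕ) (hi : i ≤ N - 1) :
    ∀ k, k < N - i →
      der^[i] c.coeff k = (((1 - X) ^ i * c) %ₘ (X ^ N - C lam)).coeff (i + k) := by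
  intro k hk
  nontriviality R
  rw [der_iter_coeff]
  set p := (1 - X) ^ i * c with hp
  have hm : (X ^ N - C lam).Monic := monic_X_pow_sub_C lam hN.ne'
  have hik : i + k < N := by omega
  have hdp : p.natDegree ≤ i + (N - 1) := by
    calc p.natDegree ≤ ((1 - X : R[X]) ^ i).natDegree + c.natDegree := natDegree_mul_le
    _ ≤ i + (N - 1) := by
        gcongr
        · calc ((1 - X : R[X]) ^ i).natDegree ≤ i * (1 - X : R[X]).natDegree := natDegree_pow_le
          _ ≤ i * 1 := by
              gcongr
              exact natDegree_sub_le_iff_left (by simp) |>.mpr (by simp)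
          _ = i := mul_one i
        · omega
  rw [modByMonic_eq_sub_mul_div p (X ^ N - C lam), coeff_sub]
  have hq : ((X ^ N - C lam) * (p /ₘ (X ^ N - C lam))).coeff (i + k) = 0 := by
    rcases eq_or_ne i 0 with rfl | hi0
    · have : p /ₘ (X ^ N - C lam) = 0 := by
        rw [divByMonic_eq_zero_iff hm, degree_X_pow_sub_C hN]
        exact lt_of_le_of_lt degree_le_natDegree
          (by exact_mod_cast (by omega : p.natDegree < N))
      simp [this]
    · have hqdeg : (p /ₘ (X ^ N - C lam)).natDegree < i := by
        rw [natDegree_divByMonic p hm, natDegree_X_pow_sub_C]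
        omega
      have h1 : (X ^ N * (p /ₘ (X ^ N - C lam))).coeff (i + k) = 0 := by
        rw [mul_comm, coeff_mul_X_pow']
        simp [Nat.not_le.mpr hik]
      have h2 : (C lam * (p /ₘ (X ^ N - C lam))).coeff (i + k) = 0 := by
        rw [coeff_C_mul, coeff_eq_zero_of_natDegree_lt (by omega), mul_zero]
      rw [sub_mul, coeff_sub, h1, h2, sub_zero]
  rw [hq, sub_zero]
end

section
/- Let c(x) ∈ R[x]/⟨x^N - λ⟩ and let ℓ, t be positive integers with ℓ + t ≤ N. If depth((1-x)^ℓ c(x)) = t, then depth(c(x)) = ℓ + t. -/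
variable {R : Type*} [CommRing R]

/-- vanishing of the i-th derivative on the window of length N - i -/
def Van (N i : ℕ) (a : ℕ → R) : Prop := ∀ k, k < N - i → der^[i] a k = 0

lemma van_succ {N i : ℕ} {a : ℕ → R} (h : Van N i a) : Van N (i + 1) a := by
  intro k hk
  rw [Function.iterate_succ_apply']
  have h1 : der^[i] a (k + 1) = 0 := h _ (by omega)
  have h2 : der^[i] a k = 0 := h _ (by omega)
  simp [der, h1, h2]

lemma van_mono {N i j : ℕ} {a : ℕ → R} (hij : i ≤ j) (h : Van N i a) : Van N j a := by
  induction j, hij using Nat.le_induction with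
  | base => exact h
  | succ n hn ih => exact van_succ ih

open Classical in
lemma depth_eq {N s : ℕ} {a : ℕ → R} (hsN : s ≤ N) (h1 : s < N → Van N s a)
    (h2 : ∀ i, i < s → ¬ Van N i a) : depth N a = s := by
  unfold depth
  rcases lt_or_eq_of_le hsN with hlt | rfl
  · rw [dif_pos ⟨s, hlt, h1 hlt⟩]
    rw [Nat.find_eq_iff]
    exact ⟨⟨hlt, h1 hlt⟩, fun m hm hc => h2 m hm hc.2⟩
  · rw [dif_neg]
    rintro ⟨i, hiN, hvi⟩
    exact h2 i hiN hvi

open Classical in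
lemma of_depth_eq {N s : ℕ} {a : ℕ → R} (h : depth N a = s) (hs : s < N) :
    Van N s a ∧ ∀ i, i < s → ¬ Van N i a := by
  unfold depth at h
  split_ifs at h with hex
  · subst h
    refine ⟨(Nat.find_spec hex).2, fun i hi hvi => ?_⟩
    exact Nat.find_min hex hi ⟨lt_trans hi hs, hvi⟩
  · omega

lemma der_rel {a b : ℕ → R} {N : ℕ} (hb : ∀ j, j + 1 < N → b (j + 1) = a (j + 1) - a j)
    (i : ℕ) : ∀ k, k + i + 2 ≤ N → der^[i + 1] a k = der^[i] b (k + 1) := by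
  induction i with
  | zero =>
    intro k hk
    simp only [Function.iterate_one, Function.iterate_zero, id]
    rw [hb k (by omega)]
    rfl
  | succ i ih =>
    intro k hk
    rw [show i + 1 + 1 = (i + 1) + 1 from rfl, Function.iterate_succ_apply' der (i + 1) a,
      Function.iterate_succ_apply' der i b]
    show der^[i+1] a (k + 1) - der^[i+1] a k = der^[i] b (k + 1 + 1) - der^[i] b (k + 1)
    rw [ih k (by omega), ih (k + 1) (by omega)]

lemma depth_step {N s : ℕ} {a b : ℕ → R} (hs1 : 1 ≤ s) (hsN : s + 1 ≤ N)
    (hb : ∀ j, j + 1 < N → b (j + 1) = a (j + 1) - a j)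
    (hdb : depth N b = s) : depth N a = s + 1 := by
  obtain ⟨hvs, hmin⟩ := of_depth_eq hdb (by omega)
  have hA : Van N (s + 1) a := by
    intro k hk
    rw [der_rel hb s k (by omega)]
    exact hvs (k + 1) (by omega)
  have hB : ¬ Van N s a := by
    intro hv
    apply hmin (s - 1) (by omega)
    have key : ∀ k, k < N - s → der^[s - 1] b (k + 1) = 0 := by
      intro k hk
      have := der_rel hb (s - 1) k (by omega)
      rw [show s - 1 + 1 = s by omega] at this
      rw [← this]
      exact hv k hk
    intro j hj
    match j with
    | (k + 1) => exact key k (by omega)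
    | 0 =>
      have h0 : der^[s] b 0 = 0 := hvs 0 (by omega)
      rw [show s = (s - 1) + 1 by omega, Function.iterate_succ_apply'] at h0
      have h1 : der^[s - 1] b 1 = 0 := key 0 (by omega)
      simpa [der, h1] using h0
  refine depth_eq hsN (fun _ => hA) (fun i hi hvi => hB ?_)
  exact van_mono (by omega) hvi

open Polynomial in
lemma mod_one_sub_X_mul {N : ℕ} [Nontrivial R] (hN : 1 ≤ N) (lam : R) (a : R[X])
    (ha : a.degree < (N : WithBot ℕ)) :
    ((1 - X) * a) %ₘ (X ^ N - C lam)
      = (1 - X) * a + C (a.coeff (N - 1)) * (X ^ N - C lam) := by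
  have hM : (X ^ N - C lam : R[X]).Monic := monic_X_pow_sub_C lam (by omega)
  have hdvd : (X ^ N - C lam : R[X]) ∣
      (1 - X) * a - ((1 - X) * a + C (a.coeff (N - 1)) * (X ^ N - C lam)) := by
    refine ⟨-(C (a.coeff (N - 1))), by ring⟩
  rw [modByMonic_eq_of_dvd_sub hM hdvd]
  rw [(modByMonic_eq_self_iff hM).2]
  rw [degree_X_pow_sub_C (by omega) lam]
  rw [degree_lt_iff_coeff_zero]
  intro m hm
  have hm1 : 1 ≤ m := by omega
  have hcz : ∀ j : ℕ, N ≤ j → a.coeff j = 0 := by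
    intro j hj
    apply coeff_eq_zero_of_degree_lt
    exact lt_of_lt_of_le ha (by exact_mod_cast hj)
  have ham : a.coeff m = 0 := hcz m hm
  obtain ⟨k, rfl⟩ : ∃ k, m = k + 1 := ⟨m - 1, by omega⟩
  simp only [coeff_add, coeff_C_mul, coeff_sub, sub_mul, one_mul, coeff_X_mul, ham,
    coeff_X_pow, coeff_C]
  rcases eq_or_ne (k + 1) N with hkN | hkN
  · rw [if_pos hkN, if_neg (show ¬ k + 1 = 0 by omega), show k = N - 1 by omega]
    ring
  · rw [if_neg hkN, if_neg (show ¬ k + 1 = 0 by omega), hcz k (by omega)]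
    ring

open Polynomial in
theorem depth_of_mul_one_sub_X_pow (N ℓ t : ℕ) (hℓ : 1 ≤ ℓ) (ht : 1 ≤ t) (hlt : ℓ + t ≤ N)
    (lam : R) (hlam : IsUnit lam) (c : Polynomial R) (hc : c.natDegree < N)
    (h : depth N ((((1 - X) ^ ℓ * c) %ₘ (X ^ N - C lam)).coeff) = t) :
    depth N c.coeff = ℓ + t := by
  rcases subsingleton_or_nontrivial R with hR | hR
  · -- trivial ring : depth of anything is 0, contradicting t ≥ 1
    exfalso
    have : depth N ((((1 - X) ^ ℓ * c) %ₘ (X ^ N - C lam)).coeff) = 0 := by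
      apply depth_eq (by omega) (fun _ => ?_) (by omega)
      intro k hk
      exact Subsingleton.elim _ _
    omega
  clear hℓ
  have hM : (X ^ N - C lam : R[X]).Monic := monic_X_pow_sub_C lam (by omega)
  have hdegM : (X ^ N - C lam : R[X]).degree = (N : WithBot ℕ) :=
    degree_X_pow_sub_C (by omega) lam
  have hdegc : c.degree < (N : WithBot ℕ) :=
    lt_of_le_of_lt degree_le_natDegree (by exact_mod_cast hc)
  induction ℓ generalizing t with
  | zero =>
    rw [pow_zero, one_mul, (modByMonic_eq_self_iff hM).2 (hdegM ▸ hdegc)] at h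
    simpa using h
  | succ ℓ ih =>
    set a : R[X] := ((1 - X) ^ ℓ * c) %ₘ (X ^ N - C lam) with ha_def
    have hdega : a.degree < (N : WithBot ℕ) := hdegM ▸ degree_modByMonic_lt _ hM
    have hstep : ((1 - X) ^ (ℓ + 1) * c) %ₘ (X ^ N - C lam)
        = ((1 - X) * a) %ₘ (X ^ N - C lam) := by
      apply modByMonic_eq_of_dvd_sub hM
      have hsplit : (1 - X : R[X]) ^ (ℓ + 1) * c = (1 - X) * ((1 - X) ^ ℓ * c) := by ring
      rw [hsplit]
      have := modByMonic_add_div ((1 - X) ^ ℓ * c) (X ^ N - C lam)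
      refine ⟨(1 - X) * (((1 - X) ^ ℓ * c) /ₘ (X ^ N - C lam)), ?_⟩
      rw [← ha_def] at this
      nth_rewrite 1 [← this]
      ring
    rw [hstep, mod_one_sub_X_mul (by omega) lam a hdega] at h
    have hb : ∀ j : ℕ, j + 1 < N →
        ((1 - X) * a + C (a.coeff (N - 1)) * (X ^ N - C lam)).coeff (j + 1)
          = a.coeff (j + 1) - a.coeff j := by
      intro j hj
      simp only [coeff_add, coeff_C_mul, coeff_sub, sub_mul, one_mul, coeff_X_mul,
        coeff_X_pow, coeff_C]
      simp [show ¬ (j + 1 = N) by omega, show ¬ (j + 1 = 0) by omega]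
    have hda : depth N a.coeff = t + 1 := depth_step ht (by omega) hb h
    have := ih (t + 1) (by omega) (by omega) hda
    omega
end

section
/- Let R be a finite commutative chain ring with maximal ideal ⟨γ⟩ of nilpotency index e, residue characteristic p, and λ = α + γβ a unit of R with α in the Teichmüller set and β a unit. Let N = n p^s with gcd(n, p) = 1. Let A(x) ∈ R[x] with μ(A(x)) ≠ 0. If x^{N} - λ divides γ^t A(x) in R[x] for some 0 ≤ t ≤ e-1, then x^{N} - λ̄ divides μ(A(x)) in R̄[x]. -/
open IsLocalRing Polynomial

theorem dvd_residue_of_dvd_gamma_pow_mul (R : Type*) [CommRing R] [Finite R] [IsLocalRing R]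
    (hchain : ∀ I J : Ideal R, I ≤ J ∨ J ≤ I)
    (γ : R) (hγ : maximalIdeal R = Ideal.span {γ})
    (e : ℕ) (he : 0 < e) (hnil : γ ^ e = 0) (hnil' : γ ^ (e - 1) ≠ 0)
    (p m : ℕ) (hp : p.Prime) (hm : 0 < m)
    (hcard : Nat.card (ResidueField R) = p ^ m)
    (ζ : R) (hζ : orderOf ζ = p ^ m - 1)
    (α : R) (hα : α ∈ insert (0 : R) (Set.range (ζ ^ · : ℕ → R))) (hα0 : α ≠ 0)
    (β : R) (hβ : IsUnit β)
    (n s : ℕ) (hn : Nat.Coprime n p) (hn0 : 0 < n)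
    (A : Polynomial R) (hA : A.map (residue R) ≠ 0)
    (t : ℕ) (ht : t ≤ e - 1)
    (hdvd : (X ^ (n * p ^ s) - C (α + γ * β)) ∣ (C (γ ^ t) * A)) :
    (X ^ (n * p ^ s) - C (residue R (α + γ * β))) ∣ A.map (residue R) := by
  set N := n * p ^ s with hN
  have hN0 : N ≠ 0 := (Nat.mul_pos hn0 (pow_pos hp.pos s)).ne'
  set f : R[X] := X ^ N - C (α + γ * β) with hf
  have hmonic : f.Monic := monic_X_pow_sub_C _ hN0
  -- f divides C (γ^t) * (A %ₘ f)
  have hdvd' : f ∣ C (γ ^ t) * (A %ₘ f) := by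
    obtain ⟨Q, hQ⟩ := hdvd
    refine ⟨Q - C (γ ^ t) * (A /ₘ f), ?_⟩
    have h1 : C (γ ^ t) * A = C (γ ^ t) * (A %ₘ f) + f * (C (γ ^ t) * (A /ₘ f)) := by
      conv_lhs => rw [← modByMonic_add_div A f]
      ring
    rw [mul_sub, ← hQ, h1]
    ring
  have hr0 : C (γ ^ t) * (A %ₘ f) = 0 := by
    by_contra hne
    obtain ⟨h, hh⟩ := hdvd'
    have hh0 : h ≠ 0 := by rintro rfl; rw [mul_zero] at hh; exact hne hh
    have hdeg : (C (γ ^ t) * (A %ₘ f)).degree < f.degree := by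
      refine lt_of_le_of_lt ?_ (degree_modByMonic_lt A hmonic)
      calc (C (γ ^ t) * (A %ₘ f)).degree ≤ (C (γ ^ t)).degree + (A %ₘ f).degree :=
            degree_mul_le _ _
        _ ≤ 0 + (A %ₘ f).degree := add_le_add_left (degree_C_le) _
        _ = (A %ₘ f).degree := by rw [zero_add]
    rw [hh] at hdeg
    rw [mul_comm, hmonic.degree_mul] at hdeg
    have hfd : f.degree ≤ h.degree + f.degree := by
      have : (0 : WithBot ℕ) ≤ h.degree := Polynomial.zero_le_degree_iff.mpr hh0
      calc f.degree = 0 + f.degree := by rw [zero_add]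
        _ ≤ h.degree + f.degree := add_le_add_left this _
    exact absurd hdeg (not_lt.mpr hfd)
  -- key: γ^t * c = 0 → residue c = 0
  have key : ∀ c : R, γ ^ t * c = 0 → residue R c = 0 := by
    intro c hc
    by_contra h0
    have hmem : c ∉ maximalIdeal R := fun hmem => h0 (Ideal.Quotient.eq_zero_iff_mem.mpr hmem)
    have hcu : IsUnit c := by
      by_contra hcu
      exact hmem ((IsLocalRing.mem_maximalIdeal c).mpr hcu)
    obtain ⟨u, rfl⟩ := hcu
    have hγt : γ ^ t = 0 := by
      have := congrArg (fun x => x * (↑u⁻¹ : R)) hc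
      simpa [mul_assoc] using this
    apply hnil'
    have : e - 1 = t + (e - 1 - t) := by omega
    rw [this, pow_add, hγt, zero_mul]
  have hrmap : (A %ₘ f).map (residue R) = 0 := by
    ext i
    rw [coeff_map, coeff_zero]
    apply key
    have := congrArg (fun q => q.coeff i) hr0
    simpa only [coeff_C_mul, coeff_zero] using this
  refine ⟨(A /ₘ f).map (residue R), ?_⟩
  have hmap : A.map (residue R) =
      (f.map (residue R)) * ((A /ₘ f).map (residue R)) := by
    conv_lhs => rw [← modByMonic_add_div A f]
    rw [Polynomial.map_add, Polynomial.map_mul, hrmap, zero_add]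
  rw [hmap, hf]
  simp [Polynomial.map_sub, Polynomial.map_pow]
end

section
/- Let R be a finite commutative chain ring with maximal ideal ⟨γ⟩ of nilpotency index e, residue characteristic p, λ = 1 + γβ with β a unit, and N = n p^s with gcd(n, p) = 1. Then in R[x]/⟨x^N - λ⟩, one has (x^n - 1)^{p^s} = γ H(x) for some unit H(x) of R[x]/⟨x^N - λ⟩. -/
set_option maxHeartbeats 1000000

open IsLocalRing Polynomial

theorem pow_sub_one_eq_gamma_mul_unit (R : Type*) [CommRing R] [Finite R] [IsLocalRing R]
    (hchain : ∀ I J : Ideal R, I ≤ J ∨ J ≤ I)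
    (γ : R) (hγ : maximalIdeal R = Ideal.span {γ})
    (e : ℕ) (he : 0 < e) (hnil : γ ^ e = 0) (hnil' : γ ^ (e - 1) ≠ 0)
    (p : ℕ) (hp : p.Prime) [CharP (ResidueField R) p]
    (β : R) (hβ : IsUnit β)
    (n s : ℕ) (hn : Nat.Coprime n p) (hn0 : 0 < n) :
    ∃ H : Polynomial R ⧸ Ideal.span {X ^ (n * p ^ s) - C (1 + γ * β)},
      IsUnit H ∧
      Ideal.Quotient.mk (Ideal.span {X ^ (n * p ^ s) - C (1 + γ * β)}) ((X ^ n - 1) ^ p ^ s) =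
        Ideal.Quotient.mk (Ideal.span {X ^ (n * p ^ s) - C (1 + γ * β)}) (C γ) * H := by
  classical
  haveI := Fact.mk hp
  set I : Ideal (Polynomial R) := Ideal.span {X ^ (n * p ^ s) - C (1 + γ * β)} with hIdef
  -- p = γ * c in R
  obtain ⟨c, hc⟩ : γ ∣ (p : R) := by
    rw [← Ideal.mem_span_singleton, ← hγ, ← IsLocalRing.ker_residue, RingHom.mem_ker,
      map_natCast]
    exact CharP.cast_eq_zero _ p
  -- integral polynomial identity : (X-1)^(p^s) - (X^(p^s)-1) = p * (X-1) * q
  obtain ⟨B, hB⟩ : (C (p : ℤ)) ∣ ((X - 1) ^ p ^ s - (X ^ p ^ s - 1) : Polynomial ℤ) := by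
    rw [← Ideal.mem_span_singleton, ← Set.image_singleton,
      ← Ideal.map_span (C : ℤ →+* Polynomial ℤ), ← ZMod.ker_intCastRingHom,
      ← Polynomial.ker_mapRingHom, RingHom.mem_ker, coe_mapRingHom]
    push_cast
    simp [Polynomial.map_sub, Polynomial.map_pow, Polynomial.map_one, Polynomial.map_X,
      sub_pow_char_pow]
  have hB1 : B.IsRoot 1 := by
    have h0 := congrArg (Polynomial.eval (1 : ℤ)) hB
    simp only [eval_sub, eval_pow, eval_X, eval_one, eval_mul, eval_C, sub_self, one_pow] at h0
    have hps : (0 : ℤ) ^ p ^ s = 0 := zero_pow (pow_pos hp.pos s).ne'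
    rw [hps] at h0
    have : (p : ℤ) * B.eval 1 = 0 := by linarith
    have hpne : (p : ℤ) ≠ 0 := Int.natCast_ne_zero.mpr hp.ne_zero
    exact (mul_eq_zero.mp this).resolve_left hpne
  obtain ⟨q, hq⟩ : (X - C (1 : ℤ)) ∣ B := (dvd_iff_isRoot).mpr hB1
  rw [hq] at hB
  -- map to R[X] via Y ↦ X^n
  set q' : Polynomial R := aeval (X ^ n : Polynomial R) q with hq'def
  have h2 := congrArg (aeval (X ^ n : Polynomial R)) hB
  simp only [map_sub, map_pow, map_mul, map_one, aeval_X, aeval_C, map_ofNat] at h2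
  have hcast : (algebraMap ℤ (Polynomial R)) ((p : ℤ)) = C γ * C c := by
    rw [eq_intCast (algebraMap ℤ (Polynomial R)), Int.cast_natCast, ← Polynomial.C_eq_natCast, hc, map_mul]
  rw [hcast] at h2
  -- key identity in R[X]
  have hkey : (X ^ n - 1 : Polynomial R) ^ p ^ s
      - C γ * (C β + C c * ((X ^ n - 1) * q')) = X ^ (n * p ^ s) - C (1 + γ * β) := by
    have hx : (X : Polynomial R) ^ (n * p ^ s) = (X ^ n) ^ p ^ s := by rw [pow_mul]
    rw [hx, map_add, map_mul, map_one]
    linear_combination h2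
  have hquot : Ideal.Quotient.mk I ((X ^ n - 1) ^ p ^ s) =
      Ideal.Quotient.mk I (C γ) * Ideal.Quotient.mk I (C β + C c * ((X ^ n - 1) * q')) := by
    rw [← map_mul, Ideal.Quotient.eq, hkey]
    exact Ideal.subset_span rfl
  refine ⟨Ideal.Quotient.mk I (C β + C c * ((X ^ n - 1) * q')), ?_, hquot⟩
  -- the factor is a unit
  by_contra hH
  obtain ⟨M, hM, hHM⟩ := exists_max_ideal_of_mem_nonunits hH
  haveI := hM
  set f : Polynomial R →+* _ := (Ideal.Quotient.mk M).comp (Ideal.Quotient.mk I) with hf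
  have hγ0 : f (C γ) = 0 := by
    have hpow : (f (C γ)) ^ e = 0 := by
      rw [← map_pow, ← C_pow, hnil, map_zero, map_zero]
    exact pow_eq_zero_iff he.ne' |>.mp hpow
  have hp0 : ((p : ℕ) : (Polynomial R ⧸ I) ⧸ M) = 0 := by
    have : ((p : ℕ) : Polynomial R) = C γ * C c := by
      rw [← Polynomial.C_eq_natCast, hc, map_mul]
    rw [← map_natCast f, this, map_mul, hγ0, zero_mul]
  haveI : CharP ((Polynomial R ⧸ I) ⧸ M) p := (CharP.charP_iff_prime_eq_zero hp).mpr hp0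
  have hgen : f (X ^ (n * p ^ s) - C (1 + γ * β)) = 0 := by
    rw [hf, RingHom.comp_apply, Ideal.Quotient.eq_zero_iff_mem.mpr
      (Ideal.subset_span rfl : (X ^ (n * p ^ s) - C (1 + γ * β) : Polynomial R) ∈ I), map_zero]
  have hxn : f (X ^ n) = 1 := by
    rw [map_sub, sub_eq_zero] at hgen
    have h1 : f (X ^ n) ^ p ^ s = 1 := by
      rw [← map_pow, ← pow_mul, hgen]
      simp only [map_add, map_mul, map_one, hγ0, zero_mul, add_zero]
    have h4 : (f (X ^ n) - 1) ^ p ^ s = 0 := by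
      rw [sub_pow_char_pow (p := p) (f (X ^ n)) 1 s, h1, one_pow, sub_self]
    have h5 := pow_eq_zero_iff (pow_pos hp.pos s).ne' |>.mp h4
    rwa [sub_eq_zero] at h5
  have hzero : f (C β + C c * ((X ^ n - 1) * q')) = 0 :=
    Ideal.Quotient.eq_zero_iff_mem.mpr hHM
  have hsub : f (X ^ n - 1) = 0 := by rw [map_sub, map_one, hxn, sub_self]
  rw [map_add, map_mul, map_mul, hsub, zero_mul, mul_zero, add_zero] at hzero
  exact ((hβ.map (C : R →+* Polynomial R)).map f).ne_zero hzero
end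

section
/- Let F_q be a finite field, λ = 1 + γβ be as above with chain ring R of nilpotency index e, residue field F_q of characteristic p, and N = n p^s with gcd(n,p)=1. In the quotient ring R[x]/⟨x^N - λ⟩, the element x^n - 1 is nilpotent with nilpotency index exactly e p^s, i.e., (x^n - 1)^{e p^s} = 0 but (x^n - 1)^{e p^s - 1} ≠ 0. -/
open IsLocalRing Polynomial

lemma key_int_identity (p : ℕ) (hp : p.Prime) (s : ℕ) :
    ∃ E : Polynomial ℤ, (X - 1 : Polynomial ℤ) ^ p ^ s
      = X ^ p ^ s - 1 + C (p : ℤ) * ((X - 1) * E) := by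
  haveI : Fact p.Prime := ⟨hp⟩
  set D : Polynomial ℤ := (X - 1) ^ p ^ s - (X ^ p ^ s - 1) with hD
  have h1 : C (p : ℤ) ∣ D := by
    rw [Polynomial.C_dvd_iff_dvd_coeff]
    intro i
    have hmap : (D.map (Int.castRingHom (ZMod p))) = 0 := by
      have hc : ((X - 1 : Polynomial (ZMod p))) ^ p ^ s = X ^ p ^ s - 1 ^ p ^ s :=
        sub_pow_char_pow _ _ _
      simp only [hD, Polynomial.map_sub, Polynomial.map_pow, Polynomial.map_one,
        Polynomial.map_X]
      rw [hc, one_pow, sub_self]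
    have h2 := congrArg (fun q => Polynomial.coeff q i) hmap
    simp only [Polynomial.coeff_map, Polynomial.coeff_zero] at h2
    exact_mod_cast (ZMod.intCast_zmod_eq_zero_iff_dvd _ p).mp h2
  obtain ⟨D₁, hD₁⟩ := h1
  have heval : D₁.eval 1 = 0 := by
    have h0 : D.eval 1 = 0 := by
      simp only [hD, Polynomial.eval_sub, Polynomial.eval_pow, Polynomial.eval_one,
        Polynomial.eval_X, sub_self]
      rw [zero_pow (pow_ne_zero s hp.ne_zero)]
      ring
    rw [hD₁] at h0
    simp only [Polynomial.eval_mul, Polynomial.eval_C] at h0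
    have hpne : (p : ℤ) ≠ 0 := by exact_mod_cast hp.ne_zero
    exact (mul_eq_zero.mp h0).resolve_left hpne
  obtain ⟨E, hE⟩ := (Polynomial.dvd_iff_isRoot).mpr heval
  refine ⟨E, ?_⟩
  have hD' : D = C (p : ℤ) * ((X - 1) * E) := by
    rw [hD₁, hE, Polynomial.C_1]
  rw [hD] at hD'
  linear_combination hD'

theorem nilpotency_index_of_X_pow_n_sub_one (R : Type*) [CommRing R] [Finite R] [IsLocalRing R]
    (hchain : ∀ I J : Ideal R, I ≤ J ∨ J ≤ I)
    (γ : R) (hγ : maximalIdeal R = Ideal.span {γ})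
    (e : ℕ) (he : 0 < e) (hnil : γ ^ e = 0) (hnil' : γ ^ (e - 1) ≠ 0)
    (p : ℕ) (hp : p.Prime) [CharP (ResidueField R) p]
    (β : R) (hβ : IsUnit β)
    (n s : ℕ) (hn : Nat.Coprime n p) (hn0 : 0 < n) :
    Ideal.Quotient.mk (Ideal.span {X ^ (n * p ^ s) - C (1 + γ * β)})
        ((X ^ n - 1) ^ (e * p ^ s)) = 0 ∧
    Ideal.Quotient.mk (Ideal.span {X ^ (n * p ^ s) - C (1 + γ * β)})
        ((X ^ n - 1) ^ (e * p ^ s - 1)) ≠ 0 := by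
  set N := n * p ^ s with hN
  set g : R[X] := X ^ N - C (1 + γ * β) with hg
  set I : Ideal R[X] := Ideal.span {g} with hI
  set π := Ideal.Quotient.mk I with hπ
  have hps : 0 < p ^ s := pow_pos hp.pos s
  have hNpos : 0 < N := Nat.mul_pos hn0 hps
  -- transfer the integer identity
  obtain ⟨E, hE⟩ := key_int_identity p hp s
  set E' : R[X] := aeval ((X : R[X]) ^ n) E with hE'
  have hEq : ((X : R[X]) ^ n - 1) ^ p ^ s
      = X ^ N - 1 + C (p : R) * (((X : R[X]) ^ n - 1) * E') := by
    have h := congrArg (aeval ((X : R[X]) ^ n)) hE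
    simp only [map_pow, map_sub, map_add, map_mul, map_one, aeval_X, aeval_C] at h
    have hc : (algebraMap ℤ R[X]) ((p : ℕ) : ℤ) = C (p : R) := by
      simp
    rw [hc, ← pow_mul, ← hN] at h
    exact h
  -- p lies in the maximal ideal
  obtain ⟨r, hr⟩ : ∃ r : R, (p : R) = γ * r := by
    have hmem : (p : R) ∈ maximalIdeal R := by
      have h0 : (IsLocalRing.residue R) (p : R) = 0 := by
        rw [map_natCast]
        exact CharP.cast_eq_zero (ResidueField R) p
      exact (Ideal.Quotient.eq_zero_iff_mem).mp h0
    rw [hγ, Ideal.mem_span_singleton] at hmem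
    obtain ⟨r, hr⟩ := hmem
    exact ⟨r, hr⟩
  have hg0 : π g = 0 := Ideal.Quotient.eq_zero_iff_mem.mpr (Ideal.subset_span rfl)
  have hXN : π (X ^ N - 1) = π (C γ * C β) := by
    have h1 : π (X ^ N) = π (C (1 + γ * β)) := by
      rw [← sub_eq_zero, ← map_sub]
      exact hg0
    rw [map_sub, h1, ← map_sub]
    congr 1
    rw [C_add, C_mul, C_1]
    ring
  -- the key factorization
  set u : R[X] ⧸ I := π (C β + C r * (((X : R[X]) ^ n - 1) * E')) with hu
  have hpoly : (C γ * C β : R[X]) + C (γ * r) * (((X : R[X]) ^ n - 1) * E')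
      = C γ * (C β + C r * (((X : R[X]) ^ n - 1) * E')) := by
    rw [C_mul]; ring
  have hkey : π (((X : R[X]) ^ n - 1) ^ p ^ s) = π (C γ) * u := by
    calc π (((X : R[X]) ^ n - 1) ^ p ^ s)
        = π (X ^ N - 1) + π (C (γ * r) * (((X : R[X]) ^ n - 1) * E')) := by
          rw [hEq, map_add, hr]
      _ = π (C γ * C β) + π (C (γ * r) * (((X : R[X]) ^ n - 1) * E')) := by rw [hXN]
      _ = π (C γ * (C β + C r * (((X : R[X]) ^ n - 1) * E'))) := by rw [← map_add, hpoly]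
      _ = π (C γ) * u := by rw [map_mul, hu]
  have hynil : ∀ k, π (((X : R[X]) ^ n - 1) ^ (p ^ s * k)) = π (C γ) ^ k * u ^ k := by
    intro k
    rw [pow_mul, map_pow, hkey, mul_pow]
  have hCγe : π (C γ) ^ e = 0 := by
    rw [← map_pow, ← C_pow, hnil, map_zero, map_zero]
  have part1 : π (((X : R[X]) ^ n - 1) ^ (e * p ^ s)) = 0 := by
    rw [mul_comm e (p ^ s), hynil e, hCγe, zero_mul]
  refine ⟨part1, ?_⟩
  -- u is a unit
  have hy : IsNilpotent (π ((X : R[X]) ^ n - 1)) := by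
    refine ⟨p ^ s * e, ?_⟩
    rw [← map_pow, hynil e, hCγe, zero_mul]
  have hunit : IsUnit u := by
    have hβu : IsUnit (π (C β)) := hβ.map (π.comp Polynomial.C)
    have hwnil : IsNilpotent (π (C r) * (π ((X : R[X]) ^ n - 1) * π E')) :=
      (Commute.all _ _).isNilpotent_mul_left ((Commute.all _ _).isNilpotent_mul_right hy)
    have hwnil' : IsNilpotent (π (C r * (((X : R[X]) ^ n - 1) * E'))) := by
      simpa only [map_mul] using hwnil
    rw [hu, map_add]
    exact hwnil'.isUnit_add_left_of_commute hβu (Commute.all _ _)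
  -- part 2
  have hsplit : e * p ^ s - 1 = p ^ s * (e - 1) + (p ^ s - 1) := by
    rcases e with _ | m
    · exact absurd he (lt_irrefl 0)
    · rw [Nat.succ_sub_one, Nat.succ_mul, mul_comm (p ^ s) m, Nat.add_sub_assoc hps]
  set f : R[X] := C (γ ^ (e - 1)) * (((X : R[X]) ^ n - 1) ^ (p ^ s - 1)) with hf
  have h2 : π (((X : R[X]) ^ n - 1) ^ (e * p ^ s - 1)) = u ^ (e - 1) * π f := by
    rw [hsplit, pow_add, map_mul, hynil (e - 1), hf, map_mul, ← map_pow, ← C_pow]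
    ring
  intro hzero
  rw [h2, IsUnit.mul_right_eq_zero (hunit.pow _)] at hzero
  have hdvd : g ∣ f := by
    rw [hπ, Ideal.Quotient.eq_zero_iff_mem, hI, Ideal.mem_span_singleton] at hzero
    exact hzero
  have hqmon : ((X : R[X]) ^ n - 1).Monic := by
    have := monic_X_pow_sub_C (1 : R) hn0.ne'
    simpa using this
  have hqpow : (((X : R[X]) ^ n - 1) ^ (p ^ s - 1)).Monic := hqmon.pow _
  have hnd : (((X : R[X]) ^ n - 1) ^ (p ^ s - 1)).natDegree = (p ^ s - 1) * n := by
    rw [hqmon.natDegree_pow]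
    congr 1
    have : ((X : R[X]) ^ n - 1) = X ^ n - C 1 := by rw [C_1]
    rw [this, natDegree_X_pow_sub_C]
  have hfne : f ≠ 0 := by
    intro h0
    have hco : f.coeff ((p ^ s - 1) * n) = γ ^ (e - 1) := by
      rw [hf, coeff_C_mul, ← hnd, hqpow.coeff_natDegree, mul_one]
    rw [h0, coeff_zero] at hco
    exact hnil' hco.symm
  have hgm : g.Monic := monic_X_pow_sub_C _ hNpos.ne'
  obtain ⟨t, ht⟩ := hdvd
  have htne : t ≠ 0 := by
    rintro rfl
    rw [mul_zero] at ht
    exact hfne ht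
  have hdegf : f.natDegree < N := by
    have h1 : f.natDegree ≤ 0 + (p ^ s - 1) * n := by
      rw [hf]
      exact natDegree_mul_le_of_le (natDegree_C _).le hnd.le
    have h2 : (p ^ s - 1) * n < p ^ s * n :=
      (Nat.mul_lt_mul_right hn0).mpr (Nat.sub_lt hps one_pos)
    rw [hN, mul_comm n (p ^ s)]
    omega
  have hdegf' : f.natDegree = g.natDegree + t.natDegree := by
    rw [ht, hgm.natDegree_mul' htne]
  have hgnd : g.natDegree = N := by rw [hg, natDegree_X_pow_sub_C]
  omega
end
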